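/- For every n ≥ 3 and every 0 ≤ k ≤ n, the number of subgroups of order 2^k in C4 × C2^{n-2} is at most the number of subgroups of order 2^k in D8 × C2^{n-3}. -/

import Mathlib

/-- `C2` : the cyclic group of order 2. -/
abbrev C2 := Multiplicative (ZMod 2)

/-- `C4` : the cyclic group of order 4. -/
abbrev C4 := Multiplicative (ZMod 4)

def dbl : C2 →* C4 :=
  MonoidHom.mk' (fun x => Multiplicative.ofAdd (2 * (x.toAdd.val : ZMod 4))) (by decide)

lemma dbl_inj : Function.Injective dbl := by decide

open DihedralGroup in
def gam : C2 × C2 →* DihedralGroup 4 :=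
  MonoidHom.mk' (fun p => if p.2.toAdd = 0 then r (2 * p.1.toAdd.val) else sr (2 * p.1.toAdd.val))
    (by decide)

lemma gam_inj : Function.Injective gam := by decide

def pr4 : C4 →* C2 := MonoidHom.mk' (fun x => Multiplicative.ofAdd (x.toAdd.val : ZMod 2)) (by decide)

lemma pr4_surj : Function.Surjective pr4 := by decide

lemma pr4_eq_one {a : C4} (h : pr4 a = 1) : a = 1 ∨ a = Multiplicative.ofAdd 2 := by
  revert h; revert a; decide

open DihedralGroup in
def del : DihedralGroup 4 →* C2 × C2 :=
  MonoidHom.mk' (fun d => match d with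
    | r i => (Multiplicative.ofAdd (i.val : ZMod 2), 1)
    | sr i => (Multiplicative.ofAdd (i.val : ZMod 2), Multiplicative.ofAdd 1)) (by decide)

lemma del_surj : Function.Surjective del := by decide

lemma del_eq_one {d : DihedralGroup 4} (h : del d = 1) : d = 1 ∨ d = DihedralGroup.r 2 := by
  revert h; revert d; decide

abbrev Gm (m : ℕ) := C4 × (Fin (m+1) → C2)
abbrev Hm (m : ℕ) := DihedralGroup 4 × (Fin m → C2)
abbrev Am (m : ℕ) := C2 × (Fin (m+1) → C2)
abbrev Qm (m : ℕ) := C2 × (C2 × (Fin m → C2))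

def alphaH (m : ℕ) : Am m →* Gm m := dbl.prodMap (MonoidHom.id _)

def betaH (m : ℕ) : Am m →* Hm m :=
  MonoidHom.mk' (fun p => (gam (p.1, p.2 0), fun i : Fin m => p.2 i.succ))
    (fun a b => Prod.ext (map_mul gam (a.1, a.2 0) (b.1, b.2 0)) rfl)

def piG (m : ℕ) : Gm m →* Qm m :=
  MonoidHom.mk' (fun p => (pr4 p.1, (p.2 0, fun i : Fin m => p.2 i.succ)))
    (fun a b => Prod.ext (map_mul pr4 a.1 b.1) rfl)

def piH (m : ℕ) : Hm m →* Qm m :=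
  MonoidHom.mk' (fun p => ((del p.1).1, ((del p.1).2, p.2)))
    (fun a b => by
      show ((del (a.1 * b.1)).1, ((del (a.1 * b.1)).2, a.2 * b.2)) = _
      rw [map_mul]
      rfl)

def cG (m : ℕ) : Gm m := (Multiplicative.ofAdd 2, 1)
def zH (m : ℕ) : Hm m := (DihedralGroup.r 2, 1)
def cA (m : ℕ) : Am m := (Multiplicative.ofAdd 1, 1)

lemma alphaH_inj (m : ℕ) : Function.Injective (alphaH m) :=
  dbl_inj.prodMap Function.injective_id

lemma betaH_inj (m : ℕ) : Function.Injective (betaH m) := by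
  rintro ⟨x, v⟩ ⟨y, w⟩ h
  have h1 : gam (x, v 0) = gam (y, w 0) := congrArg Prod.fst h
  have h2 : (fun i : Fin m => v i.succ) = (fun i : Fin m => w i.succ) := congrArg Prod.snd h
  have h3 := gam_inj h1
  have hx : x = y := congrArg Prod.fst h3
  have h0 : v 0 = w 0 := congrArg Prod.snd h3
  have hv : v = w := by
    funext i
    refine Fin.cases ?_ ?_ i
    · exact h0
    · exact fun j => congrFun h2 j
  rw [hx, hv]

lemma piG_surj (m : ℕ) : Function.Surjective (piG m) := by
  rintro ⟨x, y, v⟩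
  obtain ⟨a, ha⟩ := pr4_surj x
  refine ⟨(a, Fin.cons y v), ?_⟩
  refine Prod.ext ?_ (Prod.ext ?_ ?_)
  · show pr4 a = x
    exact ha
  · exact rfl
  · exact rfl

lemma piH_surj (m : ℕ) : Function.Surjective (piH m) := by
  rintro ⟨x, y, v⟩
  obtain ⟨d, hd⟩ := del_surj (x, y)
  exact ⟨(d, v), by simp only [piH, MonoidHom.mk'_apply, hd]⟩

lemma alphaH_cA (m : ℕ) : alphaH m (cA m) = cG m := by
  refine Prod.ext ?_ rfl
  show dbl (Multiplicative.ofAdd 1) = Multiplicative.ofAdd 2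
  decide

lemma betaH_cA (m : ℕ) : betaH m (cA m) = zH m := by
  refine Prod.ext ?_ rfl
  show gam (Multiplicative.ofAdd 1, 1) = DihedralGroup.r 2
  decide

lemma piH_zH (m : ℕ) : piH m (zH m) = 1 := by
  refine Prod.ext ?_ (Prod.ext ?_ rfl)
  · show (del (DihedralGroup.r 2)).1 = 1; decide
  · show (del (DihedralGroup.r 2)).2 = 1; decide

lemma mem_ker_piG (m : ℕ) (x : Gm m) : x ∈ (piG m).ker ↔ x = 1 ∨ x = cG m := by
  rw [MonoidHom.mem_ker]
  constructor
  · intro h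
    have h1 : pr4 x.1 = 1 := congrArg Prod.fst h
    have h2 := congrArg Prod.snd h
    have h20 : x.2 0 = 1 := congrArg Prod.fst h2
    have h2s : (fun i : Fin m => x.2 i.succ) = (fun _ => 1) := congrArg Prod.snd h2
    have hv : x.2 = 1 := by
      funext i
      refine Fin.cases ?_ ?_ i
      · exact h20
      · exact fun j => congrFun h2s j
    rcases pr4_eq_one h1 with ha | ha
    · exact Or.inl (Prod.ext ha hv)
    · exact Or.inr (Prod.ext ha hv)
  · rintro (rfl | rfl)
    · exact map_one _
    · refine Prod.ext ?_ rfl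
      show pr4 (Multiplicative.ofAdd 2) = 1
      decide

lemma mem_ker_piH (m : ℕ) (x : Hm m) : x ∈ (piH m).ker ↔ x = 1 ∨ x = zH m := by
  rw [MonoidHom.mem_ker]
  constructor
  · intro h
    have h1 : (del x.1).1 = 1 := congrArg Prod.fst h
    have h2 := congrArg Prod.snd h
    have h21 : (del x.1).2 = 1 := congrArg Prod.fst h2
    have hv : x.2 = 1 := congrArg Prod.snd h2
    have hd1 : del x.1 = 1 := Prod.ext h1 h21
    rcases del_eq_one hd1 with hd | hd
    · exact Or.inl (Prod.ext hd hv)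
    · exact Or.inr (Prod.ext hd hv)
  · rintro (rfl | rfl)
    · exact map_one _
    · exact piH_zH m

lemma cG_ne_one (m : ℕ) : cG m ≠ 1 := by
  intro h
  exact (by decide : (Multiplicative.ofAdd (2 : ZMod 4)) ≠ 1) (congrArg Prod.fst h)

lemma zH_ne_one (m : ℕ) : zH m ≠ 1 := by
  intro h
  exact (by decide : (DihedralGroup.r (2 : ZMod 4)) ≠ 1) (congrArg Prod.fst h)

lemma card_ker_piG (m : ℕ) : Nat.card (piG m).ker = 2 := by
  have hs : ((piG m).ker : Set (Gm m)) = {1, cG m} := by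
    ext x
    simp only [SetLike.mem_coe, mem_ker_piG, Set.mem_insert_iff, Set.mem_singleton_iff]
  calc Nat.card (piG m).ker = Nat.card ({1, cG m} : Set (Gm m)) :=
        Nat.card_congr (Equiv.setCongr hs)
    _ = 2 := by rw [Nat.card_coe_set_eq, Set.ncard_pair (Ne.symm (cG_ne_one m))]

lemma card_ker_piH (m : ℕ) : Nat.card (piH m).ker = 2 := by
  have hs : ((piH m).ker : Set (Hm m)) = {1, zH m} := by
    ext x
    simp only [SetLike.mem_coe, mem_ker_piH, Set.mem_insert_iff, Set.mem_singleton_iff]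
  calc Nat.card (piH m).ker = Nat.card ({1, zH m} : Set (Hm m)) :=
        Nat.card_congr (Equiv.setCongr hs)
    _ = 2 := by rw [Nat.card_coe_set_eq, Set.ncard_pair (Ne.symm (zH_ne_one m))]

lemma sq_one_range {a : C4} (h : a * a = 1) : ∃ t, dbl t = a := by
  revert h; revert a; decide

-- elementary-abelian claim: subgroups avoiding cG lie in range of alphaH
lemma le_range_alphaH (m : ℕ) {K : Subgroup (Gm m)} (hc : cG m ∉ K) :
    K ≤ (alphaH m).range := by
  intro x hx
  have hsq : x * x ∈ K := K.mul_mem hx hx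
  have hv2 : x.2 * x.2 = 1 := by
    funext i
    exact (by decide : ∀ t : C2, t * t = 1) (x.2 i)
  rcases (by decide : ∀ a : C4, a * a = 1 ∨ a * a = Multiplicative.ofAdd 2) x.1 with ha | ha
  · obtain ⟨t, ht⟩ := sq_one_range ha
    exact ⟨(t, x.2), Prod.ext ht rfl⟩
  · exfalso
    apply hc
    have : x * x = cG m := Prod.ext ha hv2
    rwa [this] at hsq


lemma card_comap' {G G' : Type*} [Group G] [Group G'] [Finite G] (f : G →* G')
    (hf : Function.Surjective f) (S : Subgroup G') :
    Nat.card (S.comap f) = Nat.card S * Nat.card f.ker := by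
  let g : (S.comap f) →* S := (f.domRestrict (S.comap f)).codRestrict S (fun x => x.2)
  have hg : Function.Surjective g := by
    rintro ⟨y, hy⟩
    obtain ⟨x, rfl⟩ := hf y
    exact ⟨⟨x, hy⟩, rfl⟩
  have hgx : ∀ x : S.comap f, (g x : G') = f (x : G) := fun x => rfl
  have e : g.ker ≃ f.ker :=
    { toFun := fun x => ⟨(x.1 : G), by
        have h1 : g x.1 = 1 := x.2
        have h2 : (g x.1 : G') = 1 := by rw [h1]; rfl
        rw [hgx] at h2
        exact h2⟩
      invFun := fun y => ⟨⟨y.1, by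
          have h1 : f y.1 = 1 := y.2
          simp [Subgroup.mem_comap, h1, S.one_mem]⟩, by
          have h1 : f y.1 = 1 := y.2
          simp only [MonoidHom.mem_ker]
          ext
          rw [hgx]
          exact h1⟩
      left_inv := fun x => by ext; rfl
      right_inv := fun y => by ext; rfl }
  have hker : Nat.card g.ker = Nat.card f.ker := Nat.card_congr e
  calc Nat.card (S.comap f) = Nat.card ((S.comap f) ⧸ g.ker) * Nat.card g.ker :=
        Subgroup.card_eq_card_quotient_mul_card_subgroup g.ker
    _ = Nat.card S * Nat.card f.ker := by
        rw [hker, Nat.card_congr (QuotientGroup.quotientKerEquivOfSurjective g hg).toEquiv]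

lemma card_map' {G G' : Type*} [Group G] [Group G'] (f : G →* G')
    (hf : Function.Injective f) (K : Subgroup G) :
    Nat.card (K.map f) = Nat.card K :=
  (Nat.card_congr (K.equivMapOfInjective f hf).toEquiv).symm

/-- The number of subgroups of order `2^k` of `G`. -/
noncomputable def s (k : ℕ) (G : Type*) [Group G] : ℕ :=
  Nat.card {H : Subgroup G // Nat.card H = 2 ^ k}

lemma key (m k : ℕ) : s k (Gm m) ≤ s k (Hm m) := by
  classical
  -- the injection
  have hGfin : Finite (Gm m) := inferInstance
  have hHfin : Finite (Hm m) := inferInstance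
  set Φ : Subgroup (Gm m) → Subgroup (Hm m) := fun K =>
    if cG m ∈ K then ((K.map (piG m)).comap (piH m))
    else ((K.comap (alphaH m)).map (betaH m)) with hΦ
  -- z-membership dichotomy
  have hz_mem : ∀ K : Subgroup (Gm m), cG m ∈ K → zH m ∈ Φ K := by
    intro K hc
    rw [hΦ]
    simp only [if_pos hc]
    rw [Subgroup.mem_comap, piH_zH]
    exact Subgroup.one_mem _
  have hz_not_mem : ∀ K : Subgroup (Gm m), cG m ∉ K → zH m ∉ Φ K := by
    intro K hc hmem
    rw [hΦ] at hmem
    simp only [if_neg hc] at hmem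
    rw [Subgroup.mem_map] at hmem
    obtain ⟨x, hx, hbx⟩ := hmem
    have hx_eq : x = cA m := betaH_inj m (by rw [hbx, betaH_cA])
    rw [hx_eq, Subgroup.mem_comap, alphaH_cA] at hx
    exact hc hx
  -- cardinality preservation
  have hcard : ∀ K : Subgroup (Gm m), Nat.card (Φ K) = Nat.card K := by
    intro K
    rw [hΦ]
    by_cases hc : cG m ∈ K
    · simp only [if_pos hc]
      have hker_le : (piG m).ker ≤ K := by
        intro x hx
        rcases (mem_ker_piG m x).mp hx with rfl | rfl
        · exact K.one_mem
        · exact hc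
      have h1 : ((K.map (piG m)).comap (piG m)) = K := by
        rw [Subgroup.comap_map_eq, sup_eq_left.mpr hker_le]
      calc Nat.card ((K.map (piG m)).comap (piH m))
          = Nat.card (K.map (piG m)) * Nat.card (piH m).ker :=
            card_comap' (piH m) (piH_surj m) _
        _ = Nat.card (K.map (piG m)) * Nat.card (piG m).ker := by
            rw [card_ker_piH, card_ker_piG]
        _ = Nat.card ((K.map (piG m)).comap (piG m)) :=
            (card_comap' (piG m) (piG_surj m) _).symm
        _ = Nat.card K := by rw [h1]
    · simp only [if_neg hc]
      have hle : K ≤ (alphaH m).range := le_range_alphaH m hc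
      have h1 : (K.comap (alphaH m)).map (alphaH m) = K := by
        rw [Subgroup.map_comap_eq, inf_eq_right.mpr hle]
      calc Nat.card ((K.comap (alphaH m)).map (betaH m))
          = Nat.card (K.comap (alphaH m)) := card_map' _ (betaH_inj m) _
        _ = Nat.card ((K.comap (alphaH m)).map (alphaH m)) :=
            (card_map' _ (alphaH_inj m) _).symm
        _ = Nat.card K := by rw [h1]
  -- injectivity
  have hinj : Function.Injective Φ := by
    intro K₁ K₂ h
    by_cases h1 : cG m ∈ K₁ <;> by_cases h2 : cG m ∈ K₂
    · rw [hΦ] at h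
      simp only [if_pos h1, if_pos h2] at h
      have hm : K₁.map (piG m) = K₂.map (piG m) := by
        have := congrArg (Subgroup.map (piH m)) h
        rwa [Subgroup.map_comap_eq_self_of_surjective (piH_surj m),
          Subgroup.map_comap_eq_self_of_surjective (piH_surj m)] at this
      have hker_le1 : (piG m).ker ≤ K₁ := by
        intro x hx
        rcases (mem_ker_piG m x).mp hx with rfl | rfl
        · exact K₁.one_mem
        · exact h1
      have hker_le2 : (piG m).ker ≤ K₂ := by
        intro x hx
        rcases (mem_ker_piG m x).mp hx with rfl | rfl
        · exact K₂.one_mem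
        · exact h2
      have := congrArg (Subgroup.comap (piG m)) hm
      rwa [Subgroup.comap_map_eq, Subgroup.comap_map_eq, sup_eq_left.mpr hker_le1,
        sup_eq_left.mpr hker_le2] at this
    · exact absurd ((h ▸ hz_mem K₁ h1)) (hz_not_mem K₂ h2)
    · exact absurd ((h.symm ▸ hz_mem K₂ h2)) (hz_not_mem K₁ h1)
    · rw [hΦ] at h
      simp only [if_neg h1, if_neg h2] at h
      have hc : K₁.comap (alphaH m) = K₂.comap (alphaH m) :=
        Subgroup.map_injective (betaH_inj m) h
      have := congrArg (Subgroup.map (alphaH m)) hc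
      rwa [Subgroup.map_comap_eq, Subgroup.map_comap_eq,
        inf_eq_right.mpr (le_range_alphaH m h1), inf_eq_right.mpr (le_range_alphaH m h2)] at this
  -- conclude
  haveI : Finite (Subgroup (Hm m)) :=
    Finite.of_injective (fun K : Subgroup (Hm m) => (K : Set (Hm m))) SetLike.coe_injective
  haveI : Finite {K : Subgroup (Hm m) // Nat.card K = 2 ^ k} := Subtype.finite
  refine Nat.card_le_card_of_injective
    (fun K => ⟨Φ K.1, by rw [hcard K.1, K.2]⟩ :
      {K : Subgroup (Gm m) // Nat.card K = 2 ^ k} → {K : Subgroup (Hm m) // Nat.card K = 2 ^ k}) ?_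
  intro K₁ K₂ h
  exact Subtype.ext (hinj (congrArg Subtype.val h))

theorem s_k_C4_le_s_k_D8 (n k : ℕ) (hn : 3 ≤ n) (hk : k ≤ n) :
    s k (C4 × (Fin (n - 2) → C2)) ≤ s k (DihedralGroup 4 × (Fin (n - 3) → C2)) := by
  obtain ⟨m, rfl⟩ : ∃ m, n = m + 3 := ⟨n - 3, by omega⟩
  rw [show m + 3 - 2 = m + 1 from by omega, show m + 3 - 3 = m from by omega]
  exact key m k
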